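/- Let S ∈ ℝ and let c : (S, ∞) → (0, ∞) be measurable with t ↦ c(t)e^{-t} decreasing on (S, ∞). Define, for t > S, u(t) = -log(∫_S^t c(t₁)e^{-t₁} dt₁) and s(t) = (∫_S^t (∫_S^{t₂} c(t₁)e^{-t₁} dt₁) dt₂) / (∫_S^t c(t₁)e^{-t₁} dt₁), assuming ∫_S^t c(t₁)e^{-t₁}dt₁ ∈ (0, ∞) for all t > S. Then for all t > S: (1) s(t) > 0 and s'(t) > 0; (2) s'(t) - s(t)u'(t) = 1; (3) (s(t) + s'(t)²/(u''(t)s(t) - s''(t))) e^{u(t) - t} = 1/c(t) wherever c is continuous and the derivatives exist; in particular s + s'²/(u''s - s'') = e^{t - u(t)}/c(t). -/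

import Mathlib

open MeasureTheory Set Filter Topology

lemma aux_neBot {D : Set ℝ} (hD : D.Countable) {t T : ℝ} (h : t < T) {E : Set ℝ}
    (hE : Ioo t T \ D ⊆ E) : (𝓝[E] t).NeBot := by
  rw [← mem_closure_iff_nhdsWithin_neBot]
  rw [mem_closure_iff]
  intro o ho hto
  have h1 : (o ∩ Ioo t T).Nonempty := by
    have : o ∩ Ioo t T ∈ 𝓝[>] t :=
      Filter.inter_mem (nhdsWithin_le_nhds (ho.mem_nhds hto)) (Ioo_mem_nhdsGT h)
    exact Filter.nonempty_of_mem this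
  have h2 : ((o ∩ Ioo t T) ∩ Dᶜ).Nonempty :=
    (hD.dense_compl ℝ).inter_open_nonempty _ (ho.inter isOpen_Ioo) h1
  obtain ⟨x, ⟨hxo, hxI⟩, hxD⟩ := h2
  exact ⟨x, hxo, hE ⟨hxI, hxD⟩⟩

lemma aux_deriv_unique {g h : ℝ → ℝ} {d e t : ℝ} {E : Set ℝ}
    (hg : HasDerivAt g d t) (hh : HasDerivAt h e t)
    (hgt : g t = h t) (hE : ∀ x ∈ E, g x = h x)
    (hne : (𝓝[E \ {t}] t).NeBot) : d = e := by
  have hle : 𝓝[E \ {t}] t ≤ 𝓝[≠] t :=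
    nhdsWithin_mono _ (fun x hx => hx.2)
  have h1 : Tendsto (slope g t) (𝓝[E \ {t}] t) (𝓝 d) :=
    (hasDerivAt_iff_tendsto_slope.1 hg).mono_left hle
  have h2 : Tendsto (slope h t) (𝓝[E \ {t}] t) (𝓝 e) :=
    (hasDerivAt_iff_tendsto_slope.1 hh).mono_left hle
  have heq : slope g t =ᶠ[𝓝[E \ {t}] t] slope h t := by
    filter_upwards [self_mem_nhdsWithin] with x hx
    simp [slope_def_field, hE x hx.1, hgt]
  exact tendsto_nhds_unique (h1.congr' heq) h2

/-- Solution of the ODE system: with `I t = ∫_S^t c(s)e^{-s} ds`,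
`u t = -log (I t)` and `sf t = (∫_S^t I(t₂) dt₂) / I t`, at every `t > S` where `c` is
continuous one has `sf t > 0`, `sf' t > 0`, `sf' t - sf t · u' t = 1`, and
`(sf + sf'²/(u'' · sf - sf'')) e^{u - t} = 1 / c` (whenever the derivatives exist). -/
theorem stmt_5 (S : ℝ) (c : ℝ → ℝ)
    (hc_meas : Measurable c)
    (hc_pos : ∀ t, S < t → 0 < c t)
    (hc_dec : AntitoneOn (fun t => c t * Real.exp (-t)) (Set.Ioi S))
    (I u sf : ℝ → ℝ)
    (hI : ∀ t, I t = ∫ s in S..t, c s * Real.exp (-s))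
    (hI_int : ∀ t, S < t → IntegrableOn (fun s => c s * Real.exp (-s)) (Set.Ioc S t))
    (hI_pos : ∀ t, S < t → 0 < I t)
    (hu : ∀ t, u t = -Real.log (I t))
    (hsf : ∀ t, sf t = (∫ s in S..t, I s) / I t) :
    ∀ t, S < t → ContinuousAt c t →
      (0 < sf t) ∧
      (∀ s1 : ℝ, HasDerivAt sf s1 t → 0 < s1) ∧
      (∀ s1 u1 : ℝ, HasDerivAt sf s1 t → HasDerivAt u u1 t → s1 - sf t * u1 = 1) ∧
      (∀ s1 u1 s2 u2 : ℝ, HasDerivAt sf s1 t → HasDerivAt u u1 t →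
        HasDerivAt (deriv sf) s2 t → HasDerivAt (deriv u) u2 t →
        (sf t + s1 ^ 2 / (u2 * sf t - s2)) * Real.exp (u t - t) = 1 / c t) := by
  intro t ht hct
  set f : ℝ → ℝ := fun s => c s * Real.exp (-s) with hf_def
  have hf_meas : Measurable f := hc_meas.mul (Real.measurable_exp.comp measurable_neg)
  have hf_pos : ∀ x, S < x → 0 < f x := fun x hx => mul_pos (hc_pos x hx) (Real.exp_pos _)
  set T : ℝ := t + 1 with hT_def
  have htT : t < T := by simp [hT_def]
  have hST : S < T := lt_trans ht htT
  have hctf : ContinuousAt f t :=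
    hct.mul ((Real.continuous_exp.comp continuous_neg).continuousAt)
  -- interval integrability of f
  have hfiS : ∀ z, S ≤ z → IntervalIntegrable f volume S z := by
    intro z hz
    rw [intervalIntegrable_iff_integrableOn_Ioc_of_le hz]
    rcases eq_or_lt_of_le hz with rfl | hz'
    · simp
    · exact hI_int z hz'
  have hfi : ∀ x y, S ≤ x → S ≤ y → IntervalIntegrable f volume x y :=
    fun x y hx hy => (hfiS x hx).symm.trans (hfiS y hy)
  -- continuity of I on Icc S T
  have hIcont : ContinuousOn I (Icc S T) := by
    have h1 : ContinuousOn (fun b => ∫ x in S..b, f x) (uIcc S T) :=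
      intervalIntegral.continuousOn_primitive_interval' (hfiS T hST.le) left_mem_uIcc
    rw [uIcc_of_le hST.le] at h1
    exact h1.congr fun x _ => hI x
  have hIcontAt : ∀ x ∈ Ioo S T, ContinuousAt I x :=
    fun x hx => hIcont.continuousAt (Icc_mem_nhds hx.1 hx.2)
  -- gap estimate : (y - x) * f y ≤ I y - I x
  have hgap : ∀ x y, S ≤ x → x < y → (y - x) * f y ≤ I y - I x := by
    intro x y hx hxy
    have hsub : I y - I x = ∫ s in Ioc x y, f s := by
      have hadd := intervalIntegral.integral_add_adjacent_intervals
        (hfiS x hx) (hfi x y hx (hx.trans hxy.le))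
      rw [← intervalIntegral.integral_of_le hxy.le, hI x, hI y]
      linarith [hadd]
    rw [hsub]
    have hmono : ∀ s ∈ Ioc x y, f y ≤ f s := by
      intro s hs
      exact hc_dec (mem_Ioi.2 (lt_of_le_of_lt hx hs.1)) (mem_Ioi.2 (lt_of_le_of_lt hx hxy)) hs.2
    have hintf : IntegrableOn f (Ioc x y) :=
      (intervalIntegrable_iff_integrableOn_Ioc_of_le hxy.le).1 (hfi x y hx (hx.trans hxy.le))
    calc (y - x) * f y = ∫ _ in Ioc x y, f y := by
          rw [setIntegral_const, Real.volume_real_Ioc_of_le hxy.le, smul_eq_mul]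
      _ ≤ ∫ s in Ioc x y, f s :=
          setIntegral_mono_on (integrableOn_const measure_Ioc_lt_top.ne)
            hintf measurableSet_Ioc hmono
  have hIS : I S = 0 := by rw [hI S, intervalIntegral.integral_same]
  have ha : 0 < I t := hI_pos t ht
  have ha' : 0 < f t := hf_pos t ht
  have hbound : (t - S) * f t ≤ I t := by
    have := hgap S t le_rfl ht
    rw [hIS] at this; linarith
  -- positivity of J = ∫ S..t I
  have hIint_uIcc : IntervalIntegrable I volume S t := by
    apply ContinuousOn.intervalIntegrable
    rw [uIcc_of_le ht.le]
    exact hIcont.mono (Icc_subset_Icc le_rfl htT.le)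
  have hJpos : 0 < ∫ s in S..t, I s :=
    intervalIntegral.intervalIntegral_pos_of_pos_on hIint_uIcc
      (fun x hx => hI_pos x hx.1) ht
  have hJlt : (∫ s in S..t, I s) < (t - S) * I t := by
    have hint2 : IntervalIntegrable (fun x => I t - I x) volume S t :=
      (intervalIntegrable_const).sub hIint_uIcc
    have h0 : 0 < ∫ x in S..t, (I t - I x) := by
      apply intervalIntegral.intervalIntegral_pos_of_pos_on hint2 _ ht
      intro x hx
      have := hgap x t hx.1.le hx.2
      have h2 : 0 < (t - x) * f t := mul_pos (by linarith [hx.2]) ha'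
      linarith
    rw [intervalIntegral.integral_sub intervalIntegrable_const hIint_uIcc,
      intervalIntegral.integral_const, smul_eq_mul] at h0
    linarith
  -- key derivative computations at points of continuity of f
  have hderivs : ∀ x ∈ Ioo S T, ContinuousAt f x →
      HasDerivAt u (-(f x / I x)) x ∧ HasDerivAt sf (1 + sf x * (-(f x / I x))) x := by
    intro x hx hfx
    have hIne : I x ≠ 0 := (hI_pos x hx.1).ne'
    have hIx : HasDerivAt I (f x) x := by
      have h := intervalIntegral.integral_hasDerivAt_right (hfiS x hx.1.le)
        (hf_meas.stronglyMeasurable.stronglyMeasurableAtFilter) hfx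
      have hIeq : I = fun y => ∫ s in S..y, f s := funext hI
      rw [hIeq]; exact h
    have hu' : HasDerivAt u (-(f x / I x)) x := by
      have hlog : HasDerivAt (fun y => Real.log (I y)) (f x / I x) x := hIx.log hIne
      have hueq : u = fun y => -Real.log (I y) := funext hu
      rw [hueq]; exact hlog.neg
    have hJx : HasDerivAt (fun y => ∫ s in S..y, I s) (I x) x := by
      apply intervalIntegral.integral_hasDerivAt_right
      · apply ContinuousOn.intervalIntegrable
        rw [uIcc_of_le hx.1.le]
        exact hIcont.mono (Icc_subset_Icc le_rfl hx.2.le)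
      · exact ContinuousOn.stronglyMeasurableAtFilter isOpen_Ioo
          (hIcont.mono Ioo_subset_Icc_self) x hx
      · exact hIcontAt x hx
    have hsf' : HasDerivAt sf
        ((I x * I x - (∫ s in S..x, I s) * f x) / (I x)^2) x := by
      have hsfeq : sf = fun y => (∫ s in S..y, I s) / I y := funext hsf
      rw [hsfeq]; exact hJx.div hIx hIne
    refine ⟨hu', ?_⟩
    convert hsf' using 1
    rw [hsf x]
    field_simp
    ring
  obtain ⟨hu0, hsf0⟩ := hderivs t ⟨ht, htT⟩ hctf
  -- value of the sf derivative and its positivity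
  have hs1pos : 0 < 1 + sf t * (-(f t / I t)) := by
    rw [hsf t]
    have key : (∫ s in S..t, I s) * f t < I t * I t := by nlinarith
    have h2 : (∫ s in S..t, I s) / I t * (f t / I t) < 1 := by
      rw [div_mul_div_comm, div_lt_one (by positivity)]
      exact key
    linarith
  refine ⟨by rw [hsf t]; exact div_pos hJpos ha, ?_, ?_, ?_⟩
  · intro s1 hs1
    rw [hs1.unique hsf0]
    exact hs1pos
  · intro s1 u1 hs1 hu1
    rw [hs1.unique hsf0, hu1.unique hu0]
    ring
  · intro s1 u1 s2 u2 hs1 hu1 hs2 hu2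
    have hu1v : u1 = -(f t / I t) := hu1.unique hu0
    have hs1v : s1 = 1 + sf t * (-(f t / I t)) := hs1.unique hsf0
    -- countable discontinuity set
    set m : ℝ := (S + t) / 2 with hm_def
    have hSm : S < m := by simp [hm_def]; linarith
    have hmt : m < t := by simp [hm_def]; linarith
    set g : ℝ → ℝ := fun x => f (max x m) with hg_def
    have hg_anti : Antitone g := by
      intro x y hxy
      exact hc_dec (mem_Ioi.2 (lt_of_lt_of_le hSm (le_max_right x m)))
        (mem_Ioi.2 (lt_of_lt_of_le hSm (le_max_right y m)))
        (max_le_max hxy le_rfl)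
    set D : Set ℝ := {x | ¬ContinuousAt g x} with hD_def
    have hDc : D.Countable := hg_anti.countable_not_continuousAt
    set E : Set ℝ := Ioo m T \ D with hE_def
    have hgf : ∀ x, m < x → ContinuousAt g x → ContinuousAt f x := by
      intro x hmx hg
      apply hg.congr
      filter_upwards [Ioi_mem_nhds hmx] with y hy
      simp [hg_def, max_eq_left (le_of_lt (mem_Ioi.1 hy))]
    have hrel : ∀ x ∈ E, deriv sf x = 1 + sf x * deriv u x := by
      intro x hx
      have hcx : ContinuousAt f x := hgf x hx.1.1 (not_not.1 hx.2)
      obtain ⟨hux, hsfx⟩ := hderivs x ⟨lt_trans hSm hx.1.1, hx.1.2⟩ hcx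
      rw [hsfx.deriv, hux.deriv]
    have htE : t ∈ E := by
      constructor
      · exact ⟨hmt, htT⟩
      · intro hD
        apply hD
        have : ContinuousAt f t := hctf
        apply this.congr
        filter_upwards [Ioi_mem_nhds hmt] with y hy
        simp [hg_def, max_eq_left (le_of_lt (mem_Ioi.1 hy))]
    -- derivative of the RHS function
    have hG : HasDerivAt (fun x => 1 + sf x * deriv u x) (s1 * u1 + sf t * u2) t := by
      have := (hs1.mul hu2).const_add 1
      rwa [hu1.deriv] at this
    have hne : (𝓝[E \ {t}] t).NeBot := by
      apply aux_neBot hDc htT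
      intro x hx
      exact ⟨⟨⟨lt_trans hmt hx.1.1, hx.1.2⟩, hx.2⟩, ne_of_gt hx.1.1⟩
    have hs2v : s2 = s1 * u1 + sf t * u2 := by
      apply aux_deriv_unique hs2 hG _ hrel hne
      rw [hs1.deriv, hu1.deriv, hs1v, hu1v]
    -- final computation
    have hden : u2 * sf t - s2 = s1 * (f t / I t) := by
      rw [hs2v, hu1v]; ring
    have hs1ne : s1 ≠ 0 := by rw [hs1v]; exact ne_of_gt hs1pos
    have hIne : I t ≠ 0 := ha.ne'
    have hfne : f t ≠ 0 := ha'.ne'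
    have hfrac : s1 ^ 2 / (u2 * sf t - s2) = s1 * (I t / f t) := by
      rw [hden]
      field_simp
    have hsum : sf t + s1 * (I t / f t) = I t / f t := by
      rw [hs1v, hsf t]
      field_simp
      ring
    rw [hfrac, hsum, hu t, Real.exp_sub, Real.exp_neg, Real.exp_log ha]
    have hcne : c t ≠ 0 := (hc_pos t ht).ne'
    have hexpne : Real.exp t ≠ 0 := (Real.exp_pos t).ne'
    rw [hf_def]
    simp only []
    rw [Real.exp_neg]
    field_simp
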